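/- With J_Δ = (m_1,…,m_n) where m_v = ∏_{σ∈Δ, v∉σ} x_σ, and J'_Δ = (m'_1,…,m'_n) as in the Peeva–Velasco refinement, for any two subsets σ = {u_1,…,u_s} and τ = {v_1,…,v_t} of {1,…,n}: lcm(m'_{u_1},…,m'_{u_s}) = lcm(m'_{v_1},…,m'_{v_t}) if and only if lcm(m_{u_1},…,m_{u_s}) = lcm(m_{v_1},…,m_{v_t}), provided Δ is the Scarf complex of J_Δ (i.e., Δ is not the boundary of a simplex). -/

import Mathlib

noncomputable section
attribute [local instance] Classical.propDecidable

/-- The simplicial complex generated by a set of faces: all nonempty subsets. -/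
def gen {V : Type} (S : Finset (Finset V)) : Finset (Finset V) :=
  S.biUnion fun F => F.powerset.filter (· ≠ ∅)

/-- The facets (maximal faces) of a complex given by its finite set of faces. -/
def facets {V : Type} (Δ : Finset (Finset V)) : Finset (Finset V) :=
  Δ.filter fun F => ∀ G ∈ Δ, F ⊆ G → F = G

/-- A (finite, abstract) simplicial complex: nonempty faces, closed under nonempty subsets. -/
def IsComplex {V : Type} (Δ : Finset (Finset V)) : Prop :=
  ∅ ∉ Δ ∧ ∀ F ∈ Δ, ∀ G, G ⊆ F → G ≠ ∅ → G ∈ Δ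

/-- `F` is a leaf of `Δ`: `F` is a facet which is either the only facet, or
there is another facet `G` (a joint) with `F ∩ (Δ ∖ F) ⊆ G`, i.e. the
intersection of `F` with any other facet is contained in `G`. -/
def IsLeaf {V : Type} (Δ : Finset (Finset V)) (F : Finset V) : Prop :=
  F ∈ facets Δ ∧ (facets Δ = {F} ∨
    ∃ G ∈ facets Δ, G ≠ F ∧ ∀ H ∈ facets Δ, H ≠ F → F ∩ H ⊆ G)

def HasLeaf {V : Type} (Δ : Finset (Finset V)) : Prop := ∃ F, IsLeaf Δ F

/-- A forest: every nonempty subcollection (complex generated by a subset of the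
facets) has a leaf. -/
def IsForest {V : Type} (Δ : Finset (Finset V)) : Prop :=
  ∀ S ⊆ facets Δ, S.Nonempty → HasLeaf (gen S)

/-- Vertex set of a complex. -/
def vtx {V : Type} (Δ : Finset (Finset V)) : Finset V := Δ.sup id

/-- Connectedness: nonempty, and any two vertices are joined by a chain of faces. -/
def Conn {V : Type} (Δ : Finset (Finset V)) : Prop :=
  Δ.Nonempty ∧ ∀ u ∈ vtx Δ, ∀ v ∈ vtx Δ,
    Relation.ReflTransGen (fun a b => ∃ σ ∈ Δ, a ∈ σ ∧ b ∈ σ) u v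

/-- A simplicial tree is a connected forest. -/
def IsTree {V : Type} (Δ : Finset (Finset V)) : Prop := Conn Δ ∧ IsForest Δ

/-! Monomials in the variables `x_σ`, indexed by the nonempty faces `σ` of a complex
`Δ`.  All monomials arising in the Peeva–Velasco construction and its refinement are
squarefree, so we represent a squarefree monomial by its finite set of variables
(a `Finset` of faces); then divisibility is `⊆`, lcm is `∪`, and a product of
monomials with disjoint supports is `∪`. -/

/-- The Peeva–Velasco generator `m_v = ∏_{σ ∈ Δ, v ∉ σ} x_σ`. -/
def mPV {V : Type} (Δ : Finset (Finset V)) (v : V) : Finset (Finset V) :=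
  Δ.filter fun σ => v ∉ σ

/-- `A_Δ(v)`: the facets of `Δ` not containing `v`. -/
def AF {V : Type} (Δ : Finset (Finset V)) (v : V) : Finset (Finset V) :=
  (facets Δ).filter fun F => v ∉ F

/-- `B_Δ(v)`: the facets of `Δ` containing `v`. -/
def BF {V : Type} (Δ : Finset (Finset V)) (v : V) : Finset (Finset V) :=
  (facets Δ).filter fun F => v ∈ F

/-- The refined generator `m'_v`: the squarefree product of the variables
`x_{G∖{v}}` for facets `G ∋ v`, the variables `x_F` for facets `F ∌ v`, and the
variables `x_σ` for maximal proper (nonempty) faces `σ` of such facets `F`. -/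
def mPV' {V : Type} (Δ : Finset (Finset V)) (v : V) : Finset (Finset V) :=
  ((BF Δ v).image (fun G => G.erase v)).filter (· ≠ ∅) ∪ AF Δ v ∪
    (AF Δ v).biUnion fun F => F.powerset.filter fun σ => σ.card + 1 = F.card ∧ σ ≠ ∅

/-- `Δ` is the boundary of the full simplex on its `n` vertices: all proper
nonempty subsets of the vertex set. -/
def IsBoundaryOfFullSimplex {n : ℕ} (Δ : Finset (Finset (Fin n))) : Prop :=
  Δ = (Finset.univ : Finset (Fin n)).powerset.filter
        fun s => s ≠ ∅ ∧ s ≠ Finset.univ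

section Aux

open Finset

variable {V : Type}

lemma facets_subset' {Δ : Finset (Finset V)} : facets Δ ⊆ Δ :=
  Finset.filter_subset _ _

lemma facet_eq' {Δ : Finset (Finset V)} {F G : Finset V}
    (hF : F ∈ facets Δ) (hG : G ∈ Δ) (h : F ⊆ G) : F = G :=
  (Finset.mem_filter.mp hF).2 G hG h

lemma exists_facet' {Δ : Finset (Finset V)} {F : Finset V} (hF : F ∈ Δ) :
    ∃ G ∈ facets Δ, F ⊆ G := by
  obtain ⟨G, hG, hmax⟩ := (Δ.filter (fun H => F ⊆ H)).exists_maximal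
    ⟨F, Finset.mem_filter.mpr ⟨hF, Finset.Subset.refl F⟩⟩
  obtain ⟨hGΔ, hFG⟩ := Finset.mem_filter.mp hG
  refine ⟨G, Finset.mem_filter.mpr ⟨hGΔ, fun H hH hGH => ?_⟩, hFG⟩
  by_contra hne
  exact hne (le_antisymm hGH (hmax (Finset.mem_filter.mpr ⟨hH, hFG.trans hGH⟩)
    hGH))

lemma mem_mPV' {Δ : Finset (Finset V)} {v : V} {η : Finset V} :
    η ∈ mPV' Δ v ↔
      ((∃ G ∈ BF Δ v, η = G.erase v) ∧ η ≠ ∅) ∨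
      η ∈ AF Δ v ∨
      ∃ F ∈ AF Δ v, η ⊆ F ∧ η.card + 1 = F.card ∧ η ≠ ∅ := by
  simp only [mPV', Finset.mem_union, Finset.mem_filter, Finset.mem_image,
    Finset.mem_biUnion, Finset.mem_powerset]
  constructor
  · rintro ((⟨⟨G, hG, hEq⟩, hne⟩ | hA) | ⟨F, hF, hsub, hcard, hne⟩)
    · exact Or.inl ⟨⟨G, hG, hEq.symm⟩, hne⟩
    · exact Or.inr (Or.inl hA)
    · exact Or.inr (Or.inr ⟨F, hF, hsub, hcard, hne⟩)
  · rintro (⟨⟨G, hG, hEq⟩, hne⟩ | hA | ⟨F, hF, hsub, hcard, hne⟩)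
    · exact Or.inl (Or.inl ⟨⟨G, hG, hEq.symm⟩, hne⟩)
    · exact Or.inl (Or.inr hA)
    · exact Or.inr ⟨F, hF, hsub, hcard, hne⟩

lemma mem_union_mPV {Δ : Finset (Finset V)} {σ F : Finset V} :
    (∃ v ∈ σ, F ∈ mPV Δ v) ↔ F ∈ Δ ∧ ¬ σ ⊆ F := by
  simp only [mPV, Finset.mem_filter, Finset.not_subset]
  constructor
  · rintro ⟨v, hv, hFΔ, hvF⟩; exact ⟨hFΔ, v, hv, hvF⟩
  · rintro ⟨hFΔ, v, hv, hvF⟩; exact ⟨v, hv, hFΔ, hvF⟩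

/-- Key lemma: if `u ∈ τ`, `G` is a facet containing `u` with `σ ⊆ G ∖ {u}`
nonempty, then `M'(σ) = M'(τ)` is impossible. -/
lemma key1 {Δ : Finset (Finset V)} {σ τ : Finset V}
    (h : ∀ η : Finset V, (∃ v ∈ σ, η ∈ mPV' Δ v) ↔ (∃ u ∈ τ, η ∈ mPV' Δ u))
    {u : V} {G : Finset V} (hu : u ∈ τ) (hG : G ∈ facets Δ) (huG : u ∈ G)
    (hσ : σ ⊆ G.erase u) (hne : G.erase u ≠ ∅) : False := by
  have hmem : ∃ w ∈ τ, G.erase u ∈ mPV' Δ w :=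
    ⟨u, hu, mem_mPV'.mpr
      (Or.inl ⟨⟨G, Finset.mem_filter.mpr ⟨hG, huG⟩, rfl⟩, hne⟩)⟩
  obtain ⟨v, hvσ, hv⟩ := (h _).mpr hmem
  have hvG : v ∈ G.erase u := hσ hvσ
  rcases mem_mPV'.mp hv with ⟨⟨G', hG', hEq⟩, -⟩ | hA | ⟨F, hF, hsub, -, -⟩
  · rw [hEq] at hvG
    exact Finset.notMem_erase v G' hvG
  · have hfac : G.erase u ∈ facets Δ := (Finset.mem_filter.mp hA).1
    have heq : G.erase u = G := facet_eq' hfac (facets_subset' hG) (Finset.erase_subset u G)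
    have : u ∈ G.erase u := heq.symm ▸ huG
    exact Finset.notMem_erase u G this
  · exact (Finset.mem_filter.mp hF).2 (hsub hvG)

/-- Key lemma: facets not containing `σ` are determined by `M'(σ)`. -/
lemma key2 {Δ : Finset (Finset V)} {σ τ : Finset V}
    (h : ∀ η : Finset V, (∃ v ∈ σ, η ∈ mPV' Δ v) ↔ (∃ u ∈ τ, η ∈ mPV' Δ u))
    {F : Finset V} (hF : F ∈ facets Δ) {v : V} (hv : v ∈ σ) (hvF : v ∉ F) :
    ¬ τ ⊆ F := by
  have hmem : ∃ w ∈ σ, F ∈ mPV' Δ w :=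
    ⟨v, hv, mem_mPV'.mpr
      (Or.inr (Or.inl (Finset.mem_filter.mpr ⟨hF, hvF⟩)))⟩
  obtain ⟨u, huτ, hu⟩ := (h _).mp hmem
  rcases mem_mPV'.mp hu with ⟨⟨G, hG, hEq⟩, -⟩ | hA | ⟨F', hF', hsub, hcard, -⟩
  · have hGf : G ∈ facets Δ := (Finset.mem_filter.mp hG).1
    have huG : u ∈ G := (Finset.mem_filter.mp hG).2
    have heq : F = G := facet_eq' hF (facets_subset' hGf)
      (hEq ▸ Finset.erase_subset u G)
    rw [heq] at hEq
    have : u ∈ G.erase u := hEq ▸ huG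
    exact absurd this (Finset.notMem_erase u G)
  · intro hτF
    exact (Finset.mem_filter.mp hA).2 (hτF huτ)
  · have hF'f : F' ∈ facets Δ := (Finset.mem_filter.mp hF').1
    have heq : F = F' := facet_eq' hF (facets_subset' hF'f) hsub
    rw [heq] at hcard
    omega

/-- Forward direction core: `M'(σ) = M'(τ)` implies faces containing `σ` contain `τ`. -/
lemma fwd {Δ : Finset (Finset V)} {σ τ : Finset V}
    (h : ∀ η : Finset V, (∃ v ∈ σ, η ∈ mPV' Δ v) ↔ (∃ u ∈ τ, η ∈ mPV' Δ u))
    (hΔ : IsComplex Δ)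
    {F : Finset V} (hF : F ∈ Δ) (hσF : σ ⊆ F) : τ ⊆ F := by
  intro u hu
  by_contra huF
  obtain ⟨G, hGf, hFG⟩ := exists_facet' hF
  have hσG : σ ⊆ G := hσF.trans hFG
  have hτG : τ ⊆ G := by
    by_contra hτG
    obtain ⟨w, hwτ, hwG⟩ := Finset.not_subset.mp hτG
    exact key2 (fun η => (h η).symm) hGf hwτ hwG hσG
  have huG : u ∈ G := hτG hu
  have hσe : σ ⊆ G.erase u := fun x hx =>
    Finset.mem_erase.mpr ⟨fun he => huF (he ▸ hσF hx), hFG (hσF hx)⟩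
  have hFe : F ⊆ G.erase u := fun x hx =>
    Finset.mem_erase.mpr ⟨fun he => huF (he ▸ hx), hFG hx⟩
  have hne : G.erase u ≠ ∅ := by
    intro he
    have : F = ∅ := Finset.subset_empty.mp (he ▸ hFe)
    exact hΔ.1 (this ▸ hF)
  exact key1 h hu hGf huG hσe hne

/-- Reverse direction core. -/
lemma rev {Δ : Finset (Finset V)} (hΔ : IsComplex Δ) {σ τ : Finset V}
    (h : ∀ F ∈ Δ, (σ ⊆ F ↔ τ ⊆ F)) {η : Finset V}
    (hη : ∃ v ∈ σ, η ∈ mPV' Δ v) : ∃ u ∈ τ, η ∈ mPV' Δ u := by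
  obtain ⟨v, hv, hmem⟩ := hη
  rcases mem_mPV'.mp hmem with ⟨⟨G, hG, hEq⟩, hne⟩ | hA | ⟨F, hF, hsub, hcard, hne⟩
  · -- η = G.erase v, G a facet containing v
    have hGf : G ∈ facets Δ := (Finset.mem_filter.mp hG).1
    have hvG : v ∈ G := (Finset.mem_filter.mp hG).2
    have hGΔ : G ∈ Δ := facets_subset' hGf
    subst hEq
    have hηΔ : G.erase v ∈ Δ := hΔ.2 G hGΔ _ (Finset.erase_subset v G) hne
    by_cases hτG : τ ⊆ G
    · have hnσ : ¬ σ ⊆ G.erase v := fun hs =>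
        Finset.notMem_erase v G (hs hv)
      have hnτ : ¬ τ ⊆ G.erase v := fun ht => hnσ ((h _ hηΔ).mpr ht)
      obtain ⟨u, huτ, huη⟩ := Finset.not_subset.mp hnτ
      have huv : u = v := by
        have huG : u ∈ G := hτG huτ
        by_contra hne'
        exact huη (Finset.mem_erase.mpr ⟨hne', huG⟩)
      exact ⟨v, huv ▸ huτ, mem_mPV'.mpr (Or.inl ⟨⟨G, hG, rfl⟩, hne⟩)⟩
    · obtain ⟨u, huτ, huG⟩ := Finset.not_subset.mp hτG
      have hcard : (G.erase v).card + 1 = G.card := Finset.card_erase_add_one hvG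
      exact ⟨u, huτ, mem_mPV'.mpr (Or.inr (Or.inr
        ⟨G, Finset.mem_filter.mpr ⟨hGf, huG⟩, Finset.erase_subset v G, hcard, hne⟩))⟩
  · -- η is a facet not containing v
    have hηf : η ∈ facets Δ := (Finset.mem_filter.mp hA).1
    have hvη : v ∉ η := (Finset.mem_filter.mp hA).2
    have hηΔ : η ∈ Δ := facets_subset' hηf
    have hnσ : ¬ σ ⊆ η := fun hs => hvη (hs hv)
    have hnτ : ¬ τ ⊆ η := fun ht => hnσ ((h _ hηΔ).mpr ht)
    obtain ⟨u, huτ, huη⟩ := Finset.not_subset.mp hnτ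
    exact ⟨u, huτ, mem_mPV'.mpr
      (Or.inr (Or.inl (Finset.mem_filter.mpr ⟨hηf, huη⟩)))⟩
  · -- η is a codim-1 face of a facet F not containing v
    have hFf : F ∈ facets Δ := (Finset.mem_filter.mp hF).1
    have hvF : v ∉ F := (Finset.mem_filter.mp hF).2
    have hFΔ : F ∈ Δ := facets_subset' hFf
    have hnσ : ¬ σ ⊆ F := fun hs => hvF (hs hv)
    have hnτ : ¬ τ ⊆ F := fun ht => hnσ ((h _ hFΔ).mpr ht)
    obtain ⟨u, huτ, huF⟩ := Finset.not_subset.mp hnτ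
    exact ⟨u, huτ, mem_mPV'.mpr (Or.inr (Or.inr
      ⟨F, Finset.mem_filter.mpr ⟨hFf, huF⟩, hsub, hcard, hne⟩))⟩

end Aux

/-- Suppose `Δ` (a simplicial complex on `1, …, n`, with every
vertex on a face, not the boundary of a simplex) is the Scarf complex of
`J_Δ = (m_1, …, m_n)` (hypothesis `hScarf`: the nonempty faces of `Δ` are exactly
the subsets of `{1, …, n}` whose lcm label is distinct from that of every other
subset).  Then for any two subsets `σ = {u_1, …, u_s}` and `τ = {v_1, …, v_t}` of
`{1, …, n}`, `lcm(m'_{u_1}, …, m'_{u_s}) = lcm(m'_{v_1}, …, m'_{v_t})` if and only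
if `lcm(m_{u_1}, …, m_{u_s}) = lcm(m_{v_1}, …, m_{v_t})`.  (For squarefree
monomials, lcm of a family is the union of supports.) -/
theorem lcm_mPV'_eq_iff_lcm_mPV_eq {n : ℕ} (Δ : Finset (Finset (Fin n)))
    (hΔ : IsComplex Δ) (hvtx : ∀ v : Fin n, ({v} : Finset (Fin n)) ∈ Δ)
    (hnb : ¬ IsBoundaryOfFullSimplex Δ)
    (hScarf : ∀ σ : Finset (Fin n), σ.Nonempty →
      (σ ∈ Δ ↔ ∀ τ : Finset (Fin n), τ ≠ σ →
        τ.biUnion (mPV Δ) ≠ σ.biUnion (mPV Δ))) :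
    ∀ σ τ : Finset (Fin n),
      σ.biUnion (mPV' Δ) = τ.biUnion (mPV' Δ) ↔
      σ.biUnion (mPV Δ) = τ.biUnion (mPV Δ) := by
  intro σ τ
  constructor
  · intro h
    have hpt : ∀ η : Finset (Fin n),
        (∃ v ∈ σ, η ∈ mPV' Δ v) ↔ (∃ u ∈ τ, η ∈ mPV' Δ u) := by
      have h' := Finset.ext_iff.mp h
      simp only [Finset.mem_biUnion] at h'
      exact h'
    have hstar : ∀ F ∈ Δ, (σ ⊆ F ↔ τ ⊆ F) := fun F hF =>
      ⟨fwd hpt hΔ hF, fwd (fun η => (hpt η).symm) hΔ hF⟩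
    ext F
    simp only [Finset.mem_biUnion]
    rw [mem_union_mPV, mem_union_mPV]
    exact ⟨fun ⟨a, b⟩ => ⟨a, fun c => b ((hstar F a).mpr c)⟩,
      fun ⟨a, b⟩ => ⟨a, fun c => b ((hstar F a).mp c)⟩⟩
  · intro h
    have h' := Finset.ext_iff.mp h
    simp only [Finset.mem_biUnion] at h'
    have hstar : ∀ F ∈ Δ, (σ ⊆ F ↔ τ ⊆ F) := by
      intro F hF
      constructor
      · intro hs
        by_contra hns
        exact (mem_union_mPV.mp ((h' F).mpr (mem_union_mPV.mpr ⟨hF, hns⟩))).2 hs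
      · intro hs
        by_contra hns
        exact (mem_union_mPV.mp ((h' F).mp (mem_union_mPV.mpr ⟨hF, hns⟩))).2 hs
    ext η
    simp only [Finset.mem_biUnion]
    exact ⟨rev hΔ hstar, rev hΔ fun F hF => (hstar F hF).symm⟩
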